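/- Let s, t > 0 and let F, H : ℝ^d × ℝ^d → [0, ∞) be measurable. Assume: (a) there exist C₀, r₁ > 0 such that F(y, η) ≤ C₀ e^{r₁(|y|^{1/t} + |η|^{1/s})} for all (y, η); (b) for every r > 0 there exists C_r > 0 such that H(y, η) ≤ C_r e^{−r(|y|^{1/t} + |η|^{1/s})} for all (y, η); (c) U ⊆ ℝ^{2d} is a set such that for every r > 0 the supremum over λ > 0 and (x, ξ) ∈ U of e^{r λ} F(λ^t x, λ^s ξ) is finite. Let V ⊆ ℝ^{2d} be bounded and let ε ∈ (0,1] satisfy V + B_ε ⊆ U, where B_ε is the open Euclidean ball of radius ε in ℝ^{2d} centered at 0. Then for every r > 0 the supremum over λ > 0 and (x, ξ) ∈ V of e^{r λ} (F * H)(λ^t x, λ^s ξ) is finite, where (F * H)(z) = ∫_{ℝ^{2d}} F(z − w) H(w) dw. (This is the analytic core of the independence of the anisotropic Gelfand–Shilov wave front set from the choice of window: F plays the role of |V_ψ u| and H of |V_φ ψ|.) -/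

import Mathlib

open MeasureTheory Real


lemma aux_rpow_add_le {a b α : ℝ} (ha : 0 ≤ a) (hb : 0 ≤ b) (hα : 0 ≤ α) :
    (a + b) ^ α ≤ 2 ^ α * (a ^ α + b ^ α) := by
  have h0 : (0:ℝ) ≤ max a b := le_max_of_le_left ha
  have hm : a + b ≤ 2 * max a b := by
    rcases le_total a b with h | h
    · rw [max_eq_right h]; linarith
    · rw [max_eq_left h]; linarith
  calc (a + b) ^ α ≤ (2 * max a b) ^ α :=
        Real.rpow_le_rpow (by positivity) hm hα
    _ = 2 ^ α * (max a b) ^ α := Real.mul_rpow (by norm_num) h0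
    _ ≤ 2 ^ α * (a ^ α + b ^ α) := by
        have : (max a b) ^ α ≤ a ^ α + b ^ α := by
          rcases le_total a b with h | h
          · rw [max_eq_right h]
            linarith [Real.rpow_nonneg ha α]
          · rw [max_eq_left h]
            linarith [Real.rpow_nonneg hb α]
        have h2 : (0:ℝ) ≤ (2:ℝ) ^ α := Real.rpow_nonneg (by norm_num) α
        exact mul_le_mul_of_nonneg_left this h2

lemma aux_integrable_exp {d : ℕ} {α : ℝ} (hα : 0 < α) :
    Integrable (fun y : EuclideanSpace ℝ (Fin d) => Real.exp (-(‖y‖ ^ α))) := by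
  set n : ℕ := ⌈(d + 1 : ℝ) / α⌉₊ with hn
  have hdn : (d : ℝ) < α * n := by
    have h1 : (d + 1 : ℝ) / α ≤ n := Nat.le_ceil _
    have h2 := (div_le_iff₀ hα).mp h1
    nlinarith [h2, hα]
  have hrnk : (Module.finrank ℝ (EuclideanSpace ℝ (Fin d)) : ℝ) < α * n := by
    simpa [finrank_euclideanSpace_fin] using hdn
  have hfac : (1:ℝ) ≤ ((Nat.factorial n) : ℝ) := by exact_mod_cast Nat.one_le_iff_ne_zero.mpr (Nat.factorial_ne_zero n)
  refine ((integrable_one_add_norm hrnk).const_mul ((2:ℝ) ^ (α * n) * (Nat.factorial n))).mono'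
    (Measurable.aestronglyMeasurable (by fun_prop)) (Filter.Eventually.of_forall fun y => ?_)
  set x := ‖y‖ with hxdef
  have hx : 0 ≤ x := norm_nonneg y
  have h2p : (0:ℝ) < (2:ℝ) ^ (α * n) := Real.rpow_pos_of_pos (by norm_num) _
  have hexp : x ^ (α * n) / (Nat.factorial n) ≤ Real.exp (x ^ α) := by
    have h := Real.pow_div_factorial_le_exp (x ^ α) (Real.rpow_nonneg hx α) n
    rwa [← Real.rpow_natCast (x ^ α) n, ← Real.rpow_mul hx] at h
  have key : (1 + x) ^ (α * n) ≤ ((2:ℝ) ^ (α * n) * (Nat.factorial n)) * Real.exp (x ^ α) := by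
    rcases le_total x 1 with h1 | h1
    · calc (1 + x) ^ (α * n) ≤ (2:ℝ) ^ (α * n) :=
            Real.rpow_le_rpow (by positivity) (by linarith) (by positivity)
        _ ≤ _ := by
            have hE : (1:ℝ) ≤ (Nat.factorial n : ℝ) * rexp (x ^ α) := by
              have := Real.one_le_exp (Real.rpow_nonneg hx α)
              nlinarith
            have h7 := mul_le_mul_of_nonneg_left hE h2p.le
            rw [mul_one] at h7
            linarith [h7, mul_assoc ((2:ℝ) ^ (α * n)) (Nat.factorial n : ℝ) (rexp (x ^ α))]
    · calc (1 + x) ^ (α * n) ≤ (2 * x) ^ (α * n) :=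
            Real.rpow_le_rpow (by positivity) (by linarith) (by positivity)
        _ = (2:ℝ) ^ (α * n) * x ^ (α * n) := Real.mul_rpow (by norm_num) hx
        _ ≤ ((2:ℝ) ^ (α * n) * (Nat.factorial n)) * Real.exp (x ^ α) := by
            have := (div_le_iff₀ (by positivity : (0:ℝ) < ((Nat.factorial n) : ℝ))).mp hexp
            nlinarith
  have hP : (0:ℝ) < (1 + x) ^ (α * n) := Real.rpow_pos_of_pos (by linarith) _
  rw [Real.norm_eq_abs, abs_of_pos (Real.exp_pos _), Real.rpow_neg (by linarith : (0:ℝ) ≤ 1 + x),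
    Real.exp_neg, inv_eq_one_div, inv_eq_one_div, mul_one_div,
    div_le_div_iff₀ (Real.exp_pos _) hP, one_mul]
  exact key

set_option maxHeartbeats 2000000 in
/-- The analytic core of window-invariance of the anisotropic Gelfand–Shilov wave front
set: super-exponential decay of `F` along anisotropic dilations over `U` transfers to
the convolution `F * H` over a slightly smaller bounded set `V` with `V + B_ε ⊆ U`,
provided `F` has at most Gelfand–Shilov exponential growth and `H` has
Gelfand–Shilov super-exponential decay. -/
theorem window_invariance_core (d : ℕ) (s t : ℝ) (hs : 0 < s) (ht : 0 < t)
    (F H : EuclideanSpace ℝ (Fin d) × EuclideanSpace ℝ (Fin d) → ℝ)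
    (hFmeas : Measurable F) (hHmeas : Measurable H)
    (hF0 : ∀ z, 0 ≤ F z) (hH0 : ∀ z, 0 ≤ H z)
    (ha : ∃ C₀ : ℝ, 0 < C₀ ∧ ∃ r₁ : ℝ, 0 < r₁ ∧ ∀ z,
      F z ≤ C₀ * Real.exp (r₁ * (‖z.1‖ ^ (1 / t) + ‖z.2‖ ^ (1 / s))))
    (hb : ∀ r : ℝ, 0 < r → ∃ C : ℝ, 0 < C ∧ ∀ z,
      H z ≤ C * Real.exp (-r * (‖z.1‖ ^ (1 / t) + ‖z.2‖ ^ (1 / s))))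
    (U V : Set (EuclideanSpace ℝ (Fin d) × EuclideanSpace ℝ (Fin d)))
    (hc : ∀ r : ℝ, 0 < r → ∃ C : ℝ, ∀ lam : ℝ, 0 < lam → ∀ p ∈ U,
      Real.exp (r * lam) * F (lam ^ t • p.1, lam ^ s • p.2) ≤ C)
    (hV : Bornology.IsBounded V) (ε : ℝ) (hε : 0 < ε) (hε1 : ε ≤ 1)
    (hVU : ∀ p ∈ V, ∀ q : EuclideanSpace ℝ (Fin d) × EuclideanSpace ℝ (Fin d),
      ‖q.1‖ ^ 2 + ‖q.2‖ ^ 2 < ε ^ 2 → p + q ∈ U) :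
    ∀ r : ℝ, 0 < r → ∃ C : ℝ, ∀ lam : ℝ, 0 < lam → ∀ p ∈ V,
      Real.exp (r * lam) *
        (∫ w : EuclideanSpace ℝ (Fin d) × EuclideanSpace ℝ (Fin d),
          F ((lam ^ t • p.1, lam ^ s • p.2) - w) * H w) ≤ C := by
  obtain ⟨C₀, hC₀, r₁, hr₁, hF⟩ := ha
  obtain ⟨M₀, hM₀⟩ := hV.exists_norm_le
  set M : ℝ := max M₀ 1 with hMdef
  have hM1 : (1:ℝ) ≤ M := le_max_right _ _
  have hM0 : (0:ℝ) < M := lt_of_lt_of_le one_pos hM1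
  have hMV : ∀ p ∈ V, ‖p.1‖ ≤ M ∧ ‖p.2‖ ≤ M := fun p hp =>
    ⟨(norm_fst_le p).trans ((hM₀ p hp).trans (le_max_left _ _)),
     (norm_snd_le p).trans ((hM₀ p hp).trans (le_max_left _ _))⟩
  intro r hr
  set α := 1 / t with hαdef
  set β := 1 / s with hβdef
  have hα : (0:ℝ) < α := by rw [hαdef]; positivity
  have hβ : (0:ℝ) < β := by rw [hβdef]; positivity
  have h2α : (0:ℝ) < 2 ^ α := Real.rpow_pos_of_pos two_pos α
  have h2β : (0:ℝ) < 2 ^ β := Real.rpow_pos_of_pos two_pos β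
  have hMα : (0:ℝ) < M ^ α := Real.rpow_pos_of_pos hM0 α
  have hMβ : (0:ℝ) < M ^ β := Real.rpow_pos_of_pos hM0 β
  set K := r₁ * (2 ^ α + 2 ^ β) with hKdef
  have hK : 0 < K := by rw [hKdef]; positivity
  set N := M ^ α + M ^ β with hNdef
  have hN : 0 < N := by rw [hNdef]; positivity
  have hε2 : (0:ℝ) < ε / 2 := by linarith
  set cc := min ((ε/2) ^ α) ((ε/2) ^ β) with hccdef
  have hcc0 : 0 < cc :=
    lt_min (Real.rpow_pos_of_pos hε2 _) (Real.rpow_pos_of_pos hε2 _)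
  set R := K + 1 + (r + K * N) / cc with hRdef
  have hRpos : 0 < R := by
    rw [hRdef]
    have : 0 ≤ (r + K * N) / cc := by positivity
    linarith
  obtain ⟨CR, hCRpos, hHR⟩ := hb R hRpos
  obtain ⟨C1h, hC1hpos, hH1⟩ := hb 1 one_pos
  obtain ⟨C₁, hC₁⟩ := hc r hr
  set D := C₀ * CR + max C₁ 0 * C1h with hDdef
  have hD0 : (0:ℝ) ≤ D := by
    rw [hDdef]
    have : (0:ℝ) ≤ max C₁ 0 := le_max_right _ _
    positivity
  clear_value M α β K N cc R D
  have hgint : Integrable (fun w : EuclideanSpace ℝ (Fin d) × EuclideanSpace ℝ (Fin d) =>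
      D * (Real.exp (-(‖w.1‖ ^ α)) * Real.exp (-(‖w.2‖ ^ β)))) := by
    have h1 := aux_integrable_exp (d := d) hα
    have h2 := aux_integrable_exp (d := d) hβ
    have h3 := h1.mul_prod h2
    rw [← Measure.volume_eq_prod] at h3
    exact h3.const_mul D
  refine ⟨D * ∫ w : EuclideanSpace ℝ (Fin d) × EuclideanSpace ℝ (Fin d),
      Real.exp (-(‖w.1‖ ^ α)) * Real.exp (-(‖w.2‖ ^ β)), ?_⟩
  intro lam hlam p hp
  have hlt : (0:ℝ) < lam ^ t := Real.rpow_pos_of_pos hlam t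
  have hls : (0:ℝ) < lam ^ s := Real.rpow_pos_of_pos hlam s
  have hlt1 : (lam ^ t) ^ α = lam := by
    rw [← Real.rpow_mul hlam.le, hαdef, mul_one_div, div_self ht.ne', Real.rpow_one]
  have hls1 : (lam ^ s) ^ β = lam := by
    rw [← Real.rpow_mul hlam.le, hβdef, mul_one_div, div_self hs.ne', Real.rpow_one]
  have key : ∀ w : EuclideanSpace ℝ (Fin d) × EuclideanSpace ℝ (Fin d),
      Real.exp (r * lam) * (F ((lam ^ t • p.1, lam ^ s • p.2) - w) * H w)
        ≤ D * (Real.exp (-(‖w.1‖ ^ α)) * Real.exp (-(‖w.2‖ ^ β))) := by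
    intro w
    have a0 : (0:ℝ) ≤ ‖w.1‖ ^ α := Real.rpow_nonneg (norm_nonneg _) _
    have b0 : (0:ℝ) ≤ ‖w.2‖ ^ β := Real.rpow_nonneg (norm_nonneg _) _
    set X := Real.exp (-(‖w.1‖ ^ α)) * Real.exp (-(‖w.2‖ ^ β)) with hXdef
    have hX : X = Real.exp (-(‖w.1‖ ^ α + ‖w.2‖ ^ β)) := by
      rw [hXdef, ← Real.exp_add]
      congr 1
      ring
    have hX0 : (0:ℝ) ≤ X := by rw [hXdef]; positivity
    clear_value X
    set u := (lam ^ t)⁻¹ • w.1 with hu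
    set v := (lam ^ s)⁻¹ • w.2 with hv
    have hw1 : lam ^ t • u = w.1 := smul_inv_smul₀ hlt.ne' w.1
    have hw2 : lam ^ s • v = w.2 := smul_inv_smul₀ hls.ne' w.2
    clear_value u v
    by_cases hcase : ‖u‖ ^ 2 + ‖v‖ ^ 2 < ε ^ 2
    · -- small case
      have hball : ‖((-u, -v) : EuclideanSpace ℝ (Fin d) × EuclideanSpace ℝ (Fin d)).1‖ ^ 2
          + ‖((-u, -v) : EuclideanSpace ℝ (Fin d) × EuclideanSpace ℝ (Fin d)).2‖ ^ 2 < ε ^ 2 := by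
        rw [show ((-u, -v) : EuclideanSpace ℝ (Fin d) × EuclideanSpace ℝ (Fin d)).1 = -u from rfl,
          show ((-u, -v) : EuclideanSpace ℝ (Fin d) × EuclideanSpace ℝ (Fin d)).2 = -v from rfl,
          norm_neg, norm_neg]
        exact hcase
      have hU : p + (-u, -v) ∈ U := hVU p hp (-u, -v) hball
      have hFb := hC₁ lam hlam _ hU
      have hz : (lam ^ t • p.1, lam ^ s • p.2) - w
          = (lam ^ t • (p + (-u, -v)).1, lam ^ s • (p + (-u, -v)).2) := by
        have e1 : (p + (-u, -v)).1 = p.1 + -u := rfl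
        have e2 : (p + (-u, -v)).2 = p.2 + -v := rfl
        have h1 : lam ^ t • (p.1 + -u) = lam ^ t • p.1 - w.1 := by
          rw [smul_add, smul_neg, hw1, sub_eq_add_neg]
        have h2 : lam ^ s • (p.2 + -v) = lam ^ s • p.2 - w.2 := by
          rw [smul_add, smul_neg, hw2, sub_eq_add_neg]
        rw [e1, e2, h1, h2]
        rfl
      calc Real.exp (r * lam) * (F ((lam ^ t • p.1, lam ^ s • p.2) - w) * H w)
          = (Real.exp (r * lam)
              * F (lam ^ t • (p + (-u, -v)).1, lam ^ s • (p + (-u, -v)).2)) * H w := by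
            rw [hz, mul_assoc]
        _ ≤ max C₁ 0 * H w :=
            mul_le_mul_of_nonneg_right (hFb.trans (le_max_left _ _)) (hH0 w)
        _ ≤ max C₁ 0 * (C1h * Real.exp (-1 * (‖w.1‖ ^ α + ‖w.2‖ ^ β))) :=
            mul_le_mul_of_nonneg_left (hH1 w) (le_max_right _ _)
        _ = (max C₁ 0 * C1h) * X := by
            rw [hX, neg_one_mul, mul_assoc]
        _ ≤ D * X := by
            rw [hDdef]
            have h9 : (0:ℝ) ≤ C₀ * CR * X := mul_nonneg (mul_nonneg hC₀.le hCRpos.le) hX0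
            linarith [h9]
    · -- large case
      push_neg at hcase
      have hmax : ε / 2 ≤ ‖u‖ ∨ ε / 2 ≤ ‖v‖ := by
        by_contra hcon
        push_neg at hcon
        nlinarith [norm_nonneg u, norm_nonneg v, hcon.1, hcon.2]
      have hrho : cc * lam ≤ ‖w.1‖ ^ α + ‖w.2‖ ^ β := by
        rcases hmax with h | h
        · have h1 : lam ^ t * (ε / 2) ≤ ‖w.1‖ := by
            rw [← hw1, norm_smul, Real.norm_eq_abs, abs_of_pos hlt]
            exact mul_le_mul_of_nonneg_left h hlt.le
          have h2 : (lam ^ t * (ε / 2)) ^ α ≤ ‖w.1‖ ^ α :=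
            Real.rpow_le_rpow (by positivity) h1 hα.le
          have h3 : (lam ^ t * (ε / 2)) ^ α = lam * (ε / 2) ^ α := by
            rw [Real.mul_rpow hlt.le hε2.le, hlt1]
          have h4 : cc ≤ (ε / 2) ^ α := by rw [hccdef]; exact min_le_left _ _
          have h5 : cc * lam ≤ (ε / 2) ^ α * lam := mul_le_mul_of_nonneg_right h4 hlam.le
          rw [h3] at h2
          linarith [h5, h2, b0]
        · have h1 : lam ^ s * (ε / 2) ≤ ‖w.2‖ := by
            rw [← hw2, norm_smul, Real.norm_eq_abs, abs_of_pos hls]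
            exact mul_le_mul_of_nonneg_left h hls.le
          have h2 : (lam ^ s * (ε / 2)) ^ β ≤ ‖w.2‖ ^ β :=
            Real.rpow_le_rpow (by positivity) h1 hβ.le
          have h3 : (lam ^ s * (ε / 2)) ^ β = lam * (ε / 2) ^ β := by
            rw [Real.mul_rpow hls.le hε2.le, hls1]
          have h4 : cc ≤ (ε / 2) ^ β := by rw [hccdef]; exact min_le_right _ _
          have h5 : cc * lam ≤ (ε / 2) ^ β * lam := mul_le_mul_of_nonneg_right h4 hlam.le
          rw [h3] at h2
          linarith [h5, h2, a0]
      have hA1 : ‖((lam ^ t • p.1, lam ^ s • p.2) - w).1‖ ^ α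
          ≤ 2 ^ α * (lam * M ^ α + ‖w.1‖ ^ α) := by
        have hn : ‖((lam ^ t • p.1, lam ^ s • p.2) - w).1‖ ≤ lam ^ t * ‖p.1‖ + ‖w.1‖ := by
          simp only [Prod.fst_sub]
          refine (norm_sub_le _ _).trans ?_
          rw [norm_smul, Real.norm_eq_abs, abs_of_pos hlt]
        have hsm : (lam ^ t * ‖p.1‖) ^ α ≤ lam * M ^ α := by
          rw [Real.mul_rpow hlt.le (norm_nonneg _), hlt1]
          exact mul_le_mul_of_nonneg_left
            (Real.rpow_le_rpow (norm_nonneg _) (hMV p hp).1 hα.le) hlam.le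
        calc ‖((lam ^ t • p.1, lam ^ s • p.2) - w).1‖ ^ α
            ≤ (lam ^ t * ‖p.1‖ + ‖w.1‖) ^ α :=
              Real.rpow_le_rpow (norm_nonneg _) hn hα.le
          _ ≤ 2 ^ α * ((lam ^ t * ‖p.1‖) ^ α + ‖w.1‖ ^ α) :=
              aux_rpow_add_le (by positivity) (norm_nonneg _) hα.le
          _ ≤ 2 ^ α * (lam * M ^ α + ‖w.1‖ ^ α) :=
              mul_le_mul_of_nonneg_left (add_le_add_left hsm _) h2α.le
      have hA2 : ‖((lam ^ t • p.1, lam ^ s • p.2) - w).2‖ ^ β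
          ≤ 2 ^ β * (lam * M ^ β + ‖w.2‖ ^ β) := by
        have hn : ‖((lam ^ t • p.1, lam ^ s • p.2) - w).2‖ ≤ lam ^ s * ‖p.2‖ + ‖w.2‖ := by
          simp only [Prod.snd_sub]
          refine (norm_sub_le _ _).trans ?_
          rw [norm_smul, Real.norm_eq_abs, abs_of_pos hls]
        have hsm : (lam ^ s * ‖p.2‖) ^ β ≤ lam * M ^ β := by
          rw [Real.mul_rpow hls.le (norm_nonneg _), hls1]
          exact mul_le_mul_of_nonneg_left
            (Real.rpow_le_rpow (norm_nonneg _) (hMV p hp).2 hβ.le) hlam.le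
        calc ‖((lam ^ t • p.1, lam ^ s • p.2) - w).2‖ ^ β
            ≤ (lam ^ s * ‖p.2‖ + ‖w.2‖) ^ β :=
              Real.rpow_le_rpow (norm_nonneg _) hn hβ.le
          _ ≤ 2 ^ β * ((lam ^ s * ‖p.2‖) ^ β + ‖w.2‖ ^ β) :=
              aux_rpow_add_le (by positivity) (norm_nonneg _) hβ.le
          _ ≤ 2 ^ β * (lam * M ^ β + ‖w.2‖ ^ β) :=
              mul_le_mul_of_nonneg_left (add_le_add_left hsm _) h2β.le
      have hFb := hF ((lam ^ t • p.1, lam ^ s • p.2) - w)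
      have hHb := hHR w
      have hsum : r₁ * (‖((lam ^ t • p.1, lam ^ s • p.2) - w).1‖ ^ α
            + ‖((lam ^ t • p.1, lam ^ s • p.2) - w).2‖ ^ β)
          ≤ K * (N * lam) + K * (‖w.1‖ ^ α + ‖w.2‖ ^ β) := by
        have e1 : r₁ * (2 ^ α * (lam * M ^ α + ‖w.1‖ ^ α) + 2 ^ β * (lam * M ^ β + ‖w.2‖ ^ β))
            ≤ K * (N * lam) + K * (‖w.1‖ ^ α + ‖w.2‖ ^ β) := by
          rw [hKdef, hNdef]
          have k1 : (0:ℝ) ≤ r₁ * lam * (2 ^ α * M ^ β) :=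
            mul_nonneg (mul_nonneg hr₁.le hlam.le) (mul_nonneg h2α.le hMβ.le)
          have k2 : (0:ℝ) ≤ r₁ * lam * (2 ^ β * M ^ α) :=
            mul_nonneg (mul_nonneg hr₁.le hlam.le) (mul_nonneg h2β.le hMα.le)
          have k3 : (0:ℝ) ≤ r₁ * (2 ^ β * ‖w.1‖ ^ α) :=
            mul_nonneg hr₁.le (mul_nonneg h2β.le a0)
          have k4 : (0:ℝ) ≤ r₁ * (2 ^ α * ‖w.2‖ ^ β) :=
            mul_nonneg hr₁.le (mul_nonneg h2α.le b0)
          linarith [k1, k2, k3, k4]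
        have e2 : r₁ * (‖((lam ^ t • p.1, lam ^ s • p.2) - w).1‖ ^ α
              + ‖((lam ^ t • p.1, lam ^ s • p.2) - w).2‖ ^ β)
            ≤ r₁ * (2 ^ α * (lam * M ^ α + ‖w.1‖ ^ α) + 2 ^ β * (lam * M ^ β + ‖w.2‖ ^ β)) := by
          apply mul_le_mul_of_nonneg_left _ hr₁.le
          linarith [hA1, hA2]
        linarith
      have hEbound : r * lam + r₁ * (‖((lam ^ t • p.1, lam ^ s • p.2) - w).1‖ ^ α
            + ‖((lam ^ t • p.1, lam ^ s • p.2) - w).2‖ ^ β)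
            + (-R * (‖w.1‖ ^ α + ‖w.2‖ ^ β))
          ≤ -(‖w.1‖ ^ α + ‖w.2‖ ^ β) := by
        have hq : (r + K * N) / cc * cc = r + K * N := div_mul_cancel₀ _ hcc0.ne'
        have hql : (r + K * N) / cc * (cc * lam) = (r + K * N) * lam := by
          rw [← mul_assoc, hq]
        have hqρ : (r + K * N) * lam
            ≤ (r + K * N) / cc * (‖w.1‖ ^ α + ‖w.2‖ ^ β) := by
          rw [← hql]
          exact mul_le_mul_of_nonneg_left hrho (by positivity)
        rw [hRdef]
        linarith [hsum, hqρ]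
      calc Real.exp (r * lam) * (F ((lam ^ t • p.1, lam ^ s • p.2) - w) * H w)
          ≤ Real.exp (r * lam) * ((C₀ * Real.exp (r₁ * (‖((lam ^ t • p.1, lam ^ s • p.2) - w).1‖ ^ α
              + ‖((lam ^ t • p.1, lam ^ s • p.2) - w).2‖ ^ β)))
              * (CR * Real.exp (-R * (‖w.1‖ ^ α + ‖w.2‖ ^ β)))) := by
            apply mul_le_mul_of_nonneg_left _ (Real.exp_nonneg _)
            exact mul_le_mul hFb hHb (hH0 w) (by positivity)
        _ = (C₀ * CR) * Real.exp (r * lam + r₁ * (‖((lam ^ t • p.1, lam ^ s • p.2) - w).1‖ ^ α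
              + ‖((lam ^ t • p.1, lam ^ s • p.2) - w).2‖ ^ β)
              + (-R * (‖w.1‖ ^ α + ‖w.2‖ ^ β))) := by
            rw [Real.exp_add, Real.exp_add]; ring
        _ ≤ (C₀ * CR) * Real.exp (-(‖w.1‖ ^ α + ‖w.2‖ ^ β)) :=
            mul_le_mul_of_nonneg_left (Real.exp_le_exp.mpr hEbound) (by positivity)
        _ = (C₀ * CR) * X := by rw [hX]
        _ ≤ D * X := by
            rw [hDdef]
            linarith [mul_nonneg (mul_nonneg (le_max_right C₁ 0) hC1hpos.le) hX0]
  calc Real.exp (r * lam) * (∫ w : EuclideanSpace ℝ (Fin d) × EuclideanSpace ℝ (Fin d),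
        F ((lam ^ t • p.1, lam ^ s • p.2) - w) * H w)
      = ∫ w : EuclideanSpace ℝ (Fin d) × EuclideanSpace ℝ (Fin d),
          Real.exp (r * lam) * (F ((lam ^ t • p.1, lam ^ s • p.2) - w) * H w) :=
        (integral_const_mul _ _).symm
    _ ≤ ∫ w : EuclideanSpace ℝ (Fin d) × EuclideanSpace ℝ (Fin d),
          D * (Real.exp (-(‖w.1‖ ^ α)) * Real.exp (-(‖w.2‖ ^ β))) :=
        integral_mono_of_nonneg
          (Filter.Eventually.of_forall fun w =>
            mul_nonneg (Real.exp_nonneg _) (mul_nonneg (hF0 _) (hH0 _)))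
          hgint (Filter.Eventually.of_forall key)
    _ = D * ∫ w : EuclideanSpace ℝ (Fin d) × EuclideanSpace ℝ (Fin d),
          Real.exp (-(‖w.1‖ ^ α)) * Real.exp (-(‖w.2‖ ^ β)) :=
        integral_const_mul _ _
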